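/- For two distinct points x₁, x₂ ∈ ℝ³, the two points t₁₂ = s((x₂−x₁)/‖x₂−x₁‖) and t₂₁ = s((x₁−x₂)/‖x₁−x₂‖) of the Riemann sphere are antipodal, and hence distinct; consequently the degree-1 polynomials p₁(t) and p₂(t) with respective roots t₁₂ and t₂₁ are linearly independent over ℂ. In other words, the Atiyah linear independence conjecture holds for n = 2. -/

import Mathlib

open Polynomial

open scoped Classical in
/-- Stereographic projection from the unit sphere in `ℝ³` to the Riemann sphere. -/
noncomputable def sproj (v : EuclideanSpace ℝ (Fin 3)) : OnePoint ℂ :=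
  if v 2 = 1 then OnePoint.infty
  else (((v 0 : ℂ) + (v 1 : ℂ) * Complex.I) / (1 - (v 2 : ℂ)) : ℂ)

open scoped Classical in
/-- The antipodal map `t ↦ -1/t̄` on the Riemann sphere (with `0 ↔ ∞`). -/
noncomputable def antipode : OnePoint ℂ → OnePoint ℂ
  | OnePoint.infty => ((0 : ℂ) : OnePoint ℂ)
  | OnePoint.some z =>
      if z = 0 then OnePoint.infty else ((-1 / (starRingEnd ℂ z) : ℂ) : OnePoint ℂ)

/-- The polynomial of degree at most `1` with root `ζ`: `t - ζ` for finite `ζ`, and the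
constant polynomial `1` for `ζ = ∞`. -/
noncomputable def polyOfRoot : OnePoint ℂ → Polynomial ℂ
  | OnePoint.infty => 1
  | OnePoint.some z => X - C z

lemma antipode_ne (t : OnePoint ℂ) : antipode t ≠ t := by
  cases t with
  | infty => simp [antipode]
  | coe z =>
    by_cases hz : z = 0
    · simp [antipode, hz]
    · have hcz : (starRingEnd ℂ) z ≠ 0 := by simpa using hz
      simp only [antipode, if_neg hz, ne_eq, OnePoint.coe_eq_coe]
      intro hEq
      rw [div_eq_iff hcz] at hEq
      have h1 : ((Complex.normSq z : ℝ) : ℂ) = -1 := by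
        rw [← Complex.mul_conj]; linear_combination -hEq
      have h2 : (Complex.normSq z : ℝ) = -1 := by exact_mod_cast h1
      nlinarith [Complex.normSq_nonneg z]

lemma li_pair {a b : OnePoint ℂ} (hab : a ≠ b) :
    LinearIndependent ℂ ![polyOfRoot a, polyOfRoot b] := by
  rw [LinearIndependent.pair_iff]
  intro s t hst
  cases a with
  | infty =>
    cases b with
    | infty => exact absurd rfl hab
    | coe w =>
      simp only [polyOfRoot] at hst
      have h1 := congrArg (fun p => Polynomial.coeff p 1) hst
      have h0 := congrArg (fun p => Polynomial.coeff p 0) hst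
      simp [coeff_smul, coeff_one, coeff_sub, smul_eq_mul] at h1 h0
      constructor
      · rw [h1] at h0; simpa using h0
      · exact h1
  | coe z =>
    cases b with
    | infty =>
      simp only [polyOfRoot] at hst
      have h1 := congrArg (fun p => Polynomial.coeff p 1) hst
      have h0 := congrArg (fun p => Polynomial.coeff p 0) hst
      simp [coeff_smul, coeff_one, coeff_sub, smul_eq_mul] at h1 h0
      refine ⟨h1, ?_⟩
      rw [h1] at h0; simpa using h0
    | coe w =>
      have hzw : z ≠ w := fun hx => hab (by rw [hx])
      simp only [polyOfRoot] at hst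
      have h1 := congrArg (fun p => Polynomial.coeff p 1) hst
      have h0 := congrArg (fun p => Polynomial.coeff p 0) hst
      simp [coeff_smul, coeff_sub, smul_eq_mul] at h1 h0
      have hs : s = 0 := by
        have ht : t = -s := by linear_combination h1
        rw [ht] at h0
        have : s * (w - z) = 0 := by linear_combination h0
        rcases mul_eq_zero.mp this with h | h
        · exact h
        · exact absurd (by linear_combination h) hzw.symm
      exact ⟨hs, by rw [hs] at h1; simpa using h1⟩

lemma sproj_neg (v : EuclideanSpace ℝ (Fin 3))
    (hv : (v 0)^2 + (v 1)^2 + (v 2)^2 = 1) :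
    sproj (-v) = antipode (sproj v) := by
  have hneg : ∀ i, (-v) i = -(v i) := fun i => rfl
  by_cases h2 : v 2 = 1
  · have h01 : (v 0)^2 + (v 1)^2 = 0 := by nlinarith
    have h0 : v 0 = 0 := by nlinarith [sq_nonneg (v 0), sq_nonneg (v 1)]
    have h1 : v 1 = 0 := by nlinarith [sq_nonneg (v 0), sq_nonneg (v 1)]
    simp [sproj, antipode, h2, hneg, h0, h1]
    norm_num
  · have hden : (1 : ℂ) - (v 2 : ℂ) ≠ 0 := by
      intro hc
      apply h2
      have : ((v 2 : ℂ)) = 1 := by linear_combination -hc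
      exact_mod_cast this
    set z : ℂ := ((v 0 : ℂ) + (v 1 : ℂ) * Complex.I) / (1 - (v 2 : ℂ)) with hzdef
    have hsv : sproj v = (z : OnePoint ℂ) := by simp [sproj, h2, hzdef]
    by_cases hz : z = 0
    · -- numerator zero, so v0 = v1 = 0, v2 = -1
      have hnum : (v 0 : ℂ) + (v 1 : ℂ) * Complex.I = 0 := by
        have := hz
        rw [hzdef, _root_.div_eq_zero_iff] at this
        tauto
      have h01 : v 0 = 0 ∧ v 1 = 0 := by
        constructor <;>
        · have := hnum
          rw [Complex.ext_iff] at this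
          simp at this
          tauto
      have hm1 : v 2 = -1 := by
        have hsq : (v 2 - 1) * (v 2 + 1) = 0 := by nlinarith [h01.1, h01.2]
        rcases mul_eq_zero.mp hsq with hc | hc
        · exact absurd (by linarith) h2
        · linarith
      have : (-v) 2 = 1 := by rw [hneg]; rw [hm1]; ring
      rw [hsv]
      simp [sproj, antipode, this, hz]
    · have hm1 : v 2 ≠ -1 := by
        intro hc
        apply hz
        have h01 : (v 0)^2 + (v 1)^2 = 0 := by nlinarith
        have h0 : v 0 = 0 := by nlinarith [sq_nonneg (v 0), sq_nonneg (v 1)]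
        have h1 : v 1 = 0 := by nlinarith [sq_nonneg (v 0), sq_nonneg (v 1)]
        simp [hzdef, h0, h1]
      have hneg2 : (-v) 2 ≠ 1 := by
        rw [hneg]; intro hc; exact hm1 (by linarith)
      have hconj : (starRingEnd ℂ) z =
          ((v 0 : ℂ) - (v 1 : ℂ) * Complex.I) / (1 - (v 2 : ℂ)) := by
        rw [hzdef]
        simp [map_div₀, map_add, map_sub, Complex.conj_ofReal, Complex.conj_I]
        ring
      have hconjne : (starRingEnd ℂ) z ≠ 0 := by simpa using hz
      have hden2 : (1 : ℂ) + (v 2 : ℂ) ≠ 0 := by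
        intro hc
        apply hm1
        have : ((v 2 : ℂ)) = -1 := by linear_combination hc
        have h' := congrArg Complex.re this
        simpa using h'
      have hnumne : (v 0 : ℂ) - (v 1 : ℂ) * Complex.I ≠ 0 := by
        intro hc
        apply hconjne
        rw [hconj, hc, zero_div]
      rw [hsv]
      simp only [antipode, if_neg hz, sproj, if_neg hneg2]
      congr 1
      have hC : (v 0 : ℂ)^2 + (v 1 : ℂ)^2 + (v 2 : ℂ)^2 = 1 := by
        have h' := congrArg (fun r : ℝ => (r : ℂ)) hv
        push_cast at h'
        exact h'
      rw [hconj]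
      push_cast [hneg]
      rw [div_div_eq_mul_div, div_eq_div_iff (by simpa using hden2) hnumne]
      linear_combination -hC + ((v 1 : ℝ) : ℂ)^2 * Complex.I_sq

theorem stmt6 (x₁ x₂ : EuclideanSpace ℝ (Fin 3)) (h : x₁ ≠ x₂) :
    sproj (‖x₁ - x₂‖⁻¹ • (x₁ - x₂)) = antipode (sproj (‖x₂ - x₁‖⁻¹ • (x₂ - x₁))) ∧
    sproj (‖x₂ - x₁‖⁻¹ • (x₂ - x₁)) ≠ sproj (‖x₁ - x₂‖⁻¹ • (x₁ - x₂)) ∧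
    LinearIndependent ℂ
      ![polyOfRoot (sproj (‖x₂ - x₁‖⁻¹ • (x₂ - x₁))),
        polyOfRoot (sproj (‖x₁ - x₂‖⁻¹ • (x₁ - x₂)))] := by
  set v : EuclideanSpace ℝ (Fin 3) := ‖x₂ - x₁‖⁻¹ • (x₂ - x₁) with hvdef
  have hne : x₂ - x₁ ≠ 0 := sub_ne_zero.mpr (Ne.symm h)
  have hnorm : ‖v‖ = 1 := by
    rw [hvdef, norm_smul]
    simp [norm_inv, inv_mul_cancel₀ (norm_ne_zero_iff.mpr hne)]
  have hvneg : ‖x₁ - x₂‖⁻¹ • (x₁ - x₂) = -v := by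
    rw [hvdef]
    have : x₁ - x₂ = -(x₂ - x₁) := by abel
    rw [this, norm_neg, smul_neg]
  have hsum : (v 0)^2 + (v 1)^2 + (v 2)^2 = 1 := by
    have := congrArg (fun r => r^2) hnorm
    simp only [one_pow] at this
    rw [EuclideanSpace.norm_eq] at this
    rw [Real.sq_sqrt (by positivity)] at this
    rw [Fin.sum_univ_three] at this
    simpa [Real.norm_eq_abs, sq_abs] using this
  have hanti : sproj (-v) = antipode (sproj v) := sproj_neg v hsum
  have hne2 : sproj v ≠ sproj (-v) := by
    rw [hanti]
    exact fun hx => antipode_ne (sproj v) hx.symm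
  rw [hvneg]
  exact ⟨hanti, hne2, li_pair hne2⟩
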